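/- Let σ be a finite positive Borel measure on ℝ with support contained in [α,β] and σ(ℝ) > 0, and let φ be its Markov function. Let δ > 0 and let {z_k}_{k≥0} be pairwise distinct complex numbers with Im z_k > δ for all k. For each n ≥ 0, let σ_n be a finite positive Borel measure on ℝ with support contained in [α,β], set R_n(λ) = ∫ dσ_n(t)/(t − λ), and assume that sup_n σ_n(ℝ) < ∞ and that R_n(z_k) = φ(z_k) for all 0 ≤ k ≤ n. Then R_n converges to φ uniformly on every compact subset of ℂ ∖ [α,β]. -/

import Mathlib

open MeasureTheory Metric Filter Set Topology

noncomputable section StmtAux19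

/-- The segment `[α,β]` as a subset of `ℂ`. -/
def segS (α β : ℝ) : Set ℂ := (fun x : ℝ => (x : ℂ)) '' Set.Icc α β

/-- The complement domain. -/
def UU (α β : ℝ) : Set ℂ := (segS α β)ᶜ

lemma mem_segS_iff {α β : ℝ} {w : ℂ} :
    w ∈ segS α β ↔ w.im = 0 ∧ α ≤ w.re ∧ w.re ≤ β := by
  constructor
  · rintro ⟨x, hx, rfl⟩
    simpa using hx
  · rintro ⟨h0, h1, h2⟩
    exact ⟨w.re, ⟨h1, h2⟩, by apply Complex.ext <;> simp [h0]⟩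

lemma isCompact_segS (α β : ℝ) : IsCompact (segS α β) :=
  isCompact_Icc.image Complex.continuous_ofReal

lemma isClosed_segS (α β : ℝ) : IsClosed (segS α β) := (isCompact_segS α β).isClosed

lemma isOpen_UU (α β : ℝ) : IsOpen (UU α β) := (isClosed_segS α β).isOpen_compl

lemma segS_nonempty {α β : ℝ} (hαβ : α ≤ β) : (segS α β).Nonempty :=
  ⟨(α : ℂ), ⟨α, ⟨le_refl α, hαβ⟩, rfl⟩⟩

lemma infDist_pos_UU {α β : ℝ} (hαβ : α ≤ β) {lam : ℂ} (h : lam ∈ UU α β) :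
    0 < infDist lam (segS α β) :=
  ((isClosed_segS α β).notMem_iff_infDist_pos (segS_nonempty hαβ)).mp h

lemma mem_UU_of_im_pos {α β : ℝ} {w : ℂ} (h : 0 < w.im) : w ∈ UU α β := by
  intro hw
  rw [mem_segS_iff] at hw
  linarith [hw.1]

lemma den_ne_zero {α β : ℝ} {lam : ℂ} (h : lam ∈ UU α β) (t : Set.Icc α β) :
    ((t : ℝ) : ℂ) - lam ≠ 0 := by
  intro h0
  rw [sub_eq_zero] at h0
  exact h ⟨(t : ℝ), t.2, h0⟩

open Classical in
/-- The Cauchy kernel as a continuous map on the segment. -/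
def cf (α β : ℝ) (lam : ℂ) : C(Set.Icc α β, ℂ) :=
  if h : ∀ t : Set.Icc α β, ((t : ℝ) : ℂ) - lam ≠ 0 then
    ⟨fun t => (((t : ℝ) : ℂ) - lam)⁻¹,
      ((Complex.continuous_ofReal.comp continuous_subtype_val).sub continuous_const).inv₀ h⟩
  else 0

open Classical in
lemma cf_apply {α β : ℝ} {lam : ℂ} (h : lam ∈ UU α β) (t : Set.Icc α β) :
    cf α β lam t = (((t : ℝ) : ℂ) - lam)⁻¹ := by
  rw [cf, dif_pos (den_ne_zero h)]
  rfl

lemma norm_cf_apply_le {α β : ℝ} (hαβ : α ≤ β) {lam : ℂ} (h : lam ∈ UU α β)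
    (t : Set.Icc α β) : ‖cf α β lam t‖ ≤ (infDist lam (segS α β))⁻¹ := by
  rw [cf_apply h]
  have h1 : infDist lam (segS α β) ≤ ‖((t : ℝ) : ℂ) - lam‖ := by
    have : ((t : ℝ) : ℂ) ∈ segS α β := ⟨(t : ℝ), t.2, rfl⟩
    calc infDist lam (segS α β) ≤ dist lam ((t : ℝ) : ℂ) := infDist_le_dist_of_mem this
    _ = ‖((t : ℝ) : ℂ) - lam‖ := by rw [dist_eq_norm, norm_sub_rev]
  rw [norm_inv]
  exact inv_anti₀ (infDist_pos_UU hαβ h) h1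

lemma norm_cf_le {α β : ℝ} (hαβ : α ≤ β) {lam : ℂ} (h : lam ∈ UU α β) :
    ‖cf α β lam‖ ≤ (infDist lam (segS α β))⁻¹ :=
  ((cf α β lam).norm_le (inv_nonneg.mpr infDist_nonneg)).mpr (norm_cf_apply_le hαβ h)

lemma cf_sub {α β : ℝ} {lam mu : ℂ} (hlam : lam ∈ UU α β) (hmu : mu ∈ UU α β) :
    cf α β mu - cf α β lam = (mu - lam) • (cf α β mu * cf α β lam) := by
  ext t
  simp only [ContinuousMap.sub_apply, ContinuousMap.smul_apply, ContinuousMap.mul_apply,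
    cf_apply hlam, cf_apply hmu, smul_eq_mul]
  have h1 := den_ne_zero hlam t
  have h2 := den_ne_zero hmu t
  field_simp
  ring

lemma cf_continuousAt {α β : ℝ} (hαβ : α ≤ β) {lam : ℂ} (h : lam ∈ UU α β) :
    ContinuousAt (cf α β) lam := by
  set d := infDist lam (segS α β) with hd
  have hdpos : 0 < d := infDist_pos_UU hαβ h
  apply continuousAt_of_locally_lipschitz (half_pos hdpos) ((d / 2)⁻¹ * d⁻¹)
  intro y hy
  have hyU : y ∈ UU α β := by
    intro hyS
    have : d ≤ dist lam y := infDist_le_dist_of_mem hyS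
    rw [dist_comm] at this
    linarith [hy, this, half_lt_self hdpos]
  have hyd : d / 2 ≤ infDist y (segS α β) := by
    have := infDist_le_infDist_add_dist (x := lam) (y := y) (s := segS α β)
    rw [dist_comm] at hy
    linarith
  have hnorm : ‖cf α β y - cf α β lam‖ ≤ ‖y - lam‖ * ((d / 2)⁻¹ * d⁻¹) := by
    rw [cf_sub h hyU]
    refine (norm_smul_le (y - lam) (cf α β y * cf α β lam)).trans ?_
    apply mul_le_mul_of_nonneg_left _ (norm_nonneg _)
    calc ‖cf α β y * cf α β lam‖ ≤ ‖cf α β y‖ * ‖cf α β lam‖ := norm_mul_le _ _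
      _ ≤ (d / 2)⁻¹ * d⁻¹ := by
          apply mul_le_mul _ (norm_cf_le hαβ h) (norm_nonneg _) (by positivity)
          exact (norm_cf_le hαβ hyU).trans
            (inv_anti₀ (half_pos hdpos) hyd)
  rw [dist_eq_norm, dist_eq_norm]
  calc ‖cf α β y - cf α β lam‖ ≤ ‖y - lam‖ * ((d / 2)⁻¹ * d⁻¹) := hnorm
    _ = (d / 2)⁻¹ * d⁻¹ * ‖y - lam‖ := by ring


section Part2
open MeasureTheory Metric Filter Set Topology

lemma isPreconnected_UU (α β : ℝ) : IsPreconnected (UU α β) := by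
  have hU : UU α β = (({w : ℂ | β < w.re} ∪ {w : ℂ | 0 < w.im}) ∪ {w : ℂ | w.im < 0})
      ∪ {w : ℂ | w.re < α} := by
    ext w
    simp only [UU, Set.mem_compl_iff, mem_segS_iff, Set.mem_union, Set.mem_setOf_eq]
    constructor
    · intro h
      push_neg at h
      by_cases him : w.im = 0
      · rcases lt_or_ge w.re α with h1 | h1
        · exact Or.inr h1
        · exact Or.inl (Or.inl (Or.inl (h him h1)))
      · rcases lt_or_gt_of_ne him with h' | h'
        · exact Or.inl (Or.inr h')
        · exact Or.inl (Or.inl (Or.inr h'))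
    · rintro (((h | h) | h) | h) ⟨h0, h1, h2⟩ <;> linarith
  rw [hU]
  have p1 : ((β + 1 : ℝ) : ℂ) + Complex.I ∈ {w : ℂ | β < w.re} := by
    simp [Set.mem_setOf_eq]
  have p1' : ((β + 1 : ℝ) : ℂ) + Complex.I ∈ {w : ℂ | 0 < w.im} := by
    simp [Set.mem_setOf_eq]
  have p2 : ((β + 1 : ℝ) : ℂ) - Complex.I ∈ {w : ℂ | β < w.re} := by
    simp [Set.mem_setOf_eq]
  have p2' : ((β + 1 : ℝ) : ℂ) - Complex.I ∈ {w : ℂ | w.im < 0} := by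
    simp [Set.mem_setOf_eq]
  have p3 : ((α - 1 : ℝ) : ℂ) + Complex.I ∈ {w : ℂ | 0 < w.im} := by
    simp [Set.mem_setOf_eq]
  have p3' : ((α - 1 : ℝ) : ℂ) + Complex.I ∈ {w : ℂ | w.re < α} := by
    simp [Set.mem_setOf_eq]
  apply IsPreconnected.union (((α - 1 : ℝ) : ℂ) + Complex.I)
  · exact Set.mem_union_left _ (Set.mem_union_right _ p3)
  · exact p3'
  · apply IsPreconnected.union (((β + 1 : ℝ) : ℂ) - Complex.I)
    · exact Set.mem_union_left _ p2
    · exact p2'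
    · apply IsPreconnected.union (((β + 1 : ℝ) : ℂ) + Complex.I) p1 p1'
      · exact (convex_halfSpace_re_gt β).isPreconnected
      · exact (convex_halfSpace_im_gt 0).isPreconnected
    · exact (convex_halfSpace_im_lt 0).isPreconnected
  · exact (convex_halfSpace_re_lt α).isPreconnected

lemma H_diffOn {α β : ℝ} (hαβ : α ≤ β) (L : C(Set.Icc α β, ℂ) →L[ℂ] ℂ) :
    DifferentiableOn ℂ (fun lam => L (cf α β lam)) (UU α β) := by
  intro lam hlam
  apply DifferentiableAt.differentiableWithinAt
  have hder : HasDerivAt (fun y => L (cf α β y)) (L (cf α β lam * cf α β lam)) lam := by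
    rw [hasDerivAt_iff_tendsto_slope]
    have hev : slope (fun y => L (cf α β y)) lam
        =ᶠ[𝓝[≠] lam] fun y => L (cf α β y * cf α β lam) := by
      filter_upwards [self_mem_nhdsWithin,
        nhdsWithin_le_nhds ((isOpen_UU α β).mem_nhds hlam)] with y hy1 hy2
      have hyne : y - lam ≠ 0 := sub_ne_zero.mpr hy1
      rw [slope_def_module, ← map_sub, cf_sub hlam hy2, L.map_smul, smul_smul,
        inv_mul_cancel₀ hyne, one_smul]
    rw [tendsto_congr' hev]
    have hc : ContinuousAt (fun y => L (cf α β y * cf α β lam)) lam := by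
      exact L.continuous.continuousAt.comp
        (((continuous_mul_right (cf α β lam)).continuousAt).comp (cf_continuousAt hαβ hlam))
    exact hc.tendsto.mono_left nhdsWithin_le_nhds
  exact hder.differentiableAt

lemma H_norm_le {α β : ℝ} (hαβ : α ≤ β) (L : C(Set.Icc α β, ℂ) →L[ℂ] ℂ) {lam : ℂ}
    (h : lam ∈ UU α β) :
    ‖L (cf α β lam)‖ ≤ ‖L‖ * (infDist lam (segS α β))⁻¹ :=
  (L.le_opNorm _).trans (mul_le_mul_of_nonneg_left (norm_cf_le hαβ h) (norm_nonneg L))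

lemma H_eqOn_zero {α β δ : ℝ} (hαβ : α ≤ β) (hδ : 0 < δ) {z : ℕ → ℂ}
    (hzinj : Function.Injective z) (hz : ∀ k, δ < (z k).im)
    (L : C(Set.Icc α β, ℂ) →L[ℂ] ℂ) (hzero : ∀ k, L (cf α β (z k)) = 0) :
    Set.EqOn (fun lam => L (cf α β lam)) 0 (UU α β) := by
  have hzU : ∀ k, z k ∈ UU α β := fun k => mem_UU_of_im_pos (hδ.trans (hz k))
  have hana := (H_diffOn hαβ L).analyticOnNhd (isOpen_UU α β)
  by_cases hbd : ∃ R, ∀ k, ‖z k‖ ≤ R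
  · obtain ⟨R, hR⟩ := hbd
    have hle : Filter.map z Filter.atTop ≤ Filter.principal (closedBall (0 : ℂ) R) := by
      rw [Filter.le_principal_iff, Filter.mem_map]
      exact Filter.Eventually.of_forall fun k => by
        simp only [Set.mem_preimage, mem_closedBall, dist_zero_right]; exact hR k
    obtain ⟨zs, hzsB, hcl⟩ := (isCompact_closedBall (0 : ℂ) R).exists_clusterPt hle
    have hfreq : ∀ s ∈ 𝓝 zs, ∃ᶠ k in Filter.atTop, z k ∈ s := fun s hs =>
      Filter.frequently_map.mp ((Filter.frequently_iff.mpr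
        (fun {V} hV => clusterPt_iff_nonempty.mp hcl hs hV |>.imp fun x hx => ⟨hx.2, hx.1⟩)))
    have him : δ ≤ zs.im := by
      by_contra hlt
      push_neg at hlt
      have hmem : {w : ℂ | w.im < δ} ∈ 𝓝 zs :=
        (isOpen_lt Complex.continuous_im continuous_const).mem_nhds hlt
      obtain ⟨k, hk⟩ := (hfreq _ hmem).exists
      exact absurd (hz k) (not_lt.mpr hk.le)
    have hzsU : zs ∈ UU α β := mem_UU_of_im_pos (hδ.trans_le him)
    have hev_ne : ∀ᶠ k in Filter.atTop, z k ≠ zs := by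
      by_cases hex : ∃ k0, z k0 = zs
      · obtain ⟨k0, hk0⟩ := hex
        filter_upwards [Filter.eventually_gt_atTop k0] with k hk hzk
        exact hk.ne' (hzinj (hzk.trans hk0.symm))
      · push_neg at hex
        exact Filter.Eventually.of_forall hex
    have hfr : ∃ᶠ w in 𝓝[≠] zs, L (cf α β w) = 0 := by
      rw [Filter.frequently_iff]
      intro U hU
      rw [mem_nhdsWithin] at hU
      obtain ⟨u, hu_open, hu0, huU⟩ := hU
      obtain ⟨k, hkU, hkne⟩ :=
        ((hfreq u (hu_open.mem_nhds hu0)).and_eventually hev_ne).exists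
      exact ⟨z k, huU ⟨hkU, hkne⟩, hzero k⟩
    exact hana.eqOn_zero_of_preconnected_of_frequently_eq_zero (isPreconnected_UU α β) hzsU hfr
  · push_neg at hbd
    set rS := max |α| |β| with hrSdef
    have hrS0 : (0 : ℝ) ≤ rS := (abs_nonneg α).trans (le_max_left _ _)
    have hSsub : ∀ w ∈ segS α β, ‖w‖ ≤ rS := by
      rintro w ⟨x, hx, rfl⟩
      rw [Complex.norm_real, Real.norm_eq_abs]
      rw [abs_le]
      constructor
      · have := neg_abs_le α
        have := le_max_left |α| |β|
        have := hx.1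
        linarith
      · have := le_abs_self β
        have := le_max_right |α| |β|
        have := hx.2
        linarith
    have hfar : ∀ w : ℂ, rS < ‖w‖ → w ∈ UU α β := fun w hw hwS =>
      absurd (hSsub w hwS) (not_le.mpr hw)
    have hinf : ∀ w : ℂ, ‖w‖ - rS ≤ infDist w (segS α β) := by
      intro w
      by_contra hlt
      push_neg at hlt
      obtain ⟨y, hyS, hy⟩ := (infDist_lt_iff (segS_nonempty hαβ)).mp hlt
      have h1 : ‖w‖ - ‖y‖ ≤ dist w y := by
        rw [dist_eq_norm]; exact norm_sub_norm_le w y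
      have := hSsub y hyS
      linarith
    set r := (rS + 1)⁻¹ with hrdef
    have hrpos : (0 : ℝ) < r := inv_pos.mpr (by linarith)
    set G : ℂ → ℂ := fun w => if w = 0 then 0 else L (cf α β w⁻¹) with hGdef
    have hinv_big : ∀ w : ℂ, w ≠ 0 → ∀ M : ℝ, 0 < M → ‖w‖ < M⁻¹ → M < ‖w⁻¹‖ := by
      intro w hw0 M hM hww
      rw [norm_inv, ← inv_inv M]
      exact inv_strictAnti₀ (norm_pos_iff.mpr hw0) hww
    have hball : ∀ w : ℂ, w ∈ ball (0 : ℂ) r → w ≠ 0 → rS + 1 < ‖w⁻¹‖ ∧ w⁻¹ ∈ UU α β := by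
      intro w hw hw0
      rw [mem_ball, dist_zero_right] at hw
      have h1 : rS + 1 < ‖w⁻¹‖ := hinv_big w hw0 _ (by linarith) hw
      exact ⟨h1, hfar _ (by linarith)⟩
    have hGd0 : DifferentiableOn ℂ G (ball (0 : ℂ) r \ {0}) := by
      have hcomp : DifferentiableOn ℂ (fun w : ℂ => L (cf α β w⁻¹)) (ball (0 : ℂ) r \ {0}) := by
        apply DifferentiableOn.comp (H_diffOn hαβ L) ?_ ?_
        · intro w hw
          exact (differentiableAt_inv hw.2).differentiableWithinAt
        · intro w hw
          exact (hball w hw.1 hw.2).2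
      exact hcomp.congr fun w hw => if_neg hw.2
    have hGc : ContinuousAt G 0 := by
      rw [Metric.continuousAt_iff]
      intro ε hε
      set M := rS + 1 + (‖L‖ + 1) / ε with hMdef
      have hMpos : (0 : ℝ) < M := by positivity
      refine ⟨min r M⁻¹, lt_min hrpos (inv_pos.mpr hMpos), ?_⟩
      intro w hw
      rw [dist_zero_right] at hw
      have hG0 : G 0 = 0 := if_pos rfl
      rw [hG0, dist_zero_right]
      by_cases hw0 : w = 0
      · rw [hw0, hG0, norm_zero]; exact hε
      · have hwM : ‖w‖ < M⁻¹ := lt_of_lt_of_le hw (min_le_right _ _)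
        have hwinv : M < ‖w⁻¹‖ := hinv_big w hw0 M hMpos hwM
        have hUw : w⁻¹ ∈ UU α β := hfar _ (by nlinarith [div_nonneg (by positivity : (0:ℝ) ≤ ‖L‖ + 1) hε.le])
        have hd2 : (‖L‖ + 1) / ε ≤ infDist w⁻¹ (segS α β) := by
          have := hinf w⁻¹
          linarith
        have hd2pos : (0 : ℝ) < (‖L‖ + 1) / ε := by positivity
        have h1 : ‖G w‖ ≤ ‖L‖ * (infDist w⁻¹ (segS α β))⁻¹ := by
          rw [hGdef]
          simp only [if_neg hw0]
          exact H_norm_le hαβ L hUw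
        calc ‖G w‖ ≤ ‖L‖ * (infDist w⁻¹ (segS α β))⁻¹ := h1
          _ ≤ ‖L‖ * ((‖L‖ + 1) / ε)⁻¹ := by gcongr
          _ = ‖L‖ * ε / (‖L‖ + 1) := by rw [inv_div]; ring
          _ < ε := by rw [div_lt_iff₀ (by positivity)]; nlinarith
    have hGd : DifferentiableOn ℂ G (ball (0 : ℂ) r) :=
      (Complex.differentiableOn_compl_singleton_and_continuousAt_iff
        (ball_mem_nhds 0 hrpos)).mp ⟨hGd0, hGc⟩
    have hGzero : ∃ᶠ w in 𝓝[≠] (0 : ℂ), G w = 0 := by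
      rw [Filter.frequently_iff]
      intro U hU
      rw [mem_nhdsWithin] at hU
      obtain ⟨u, hu_open, hu0, huU⟩ := hU
      obtain ⟨η, hη, hηu⟩ := Metric.isOpen_iff.mp hu_open 0 hu0
      obtain ⟨k, hk⟩ := hbd (max η⁻¹ rS)
      have hzk0 : z k ≠ 0 := by
        intro h0
        rw [h0, norm_zero] at hk
        have : (0 : ℝ) < η⁻¹ := inv_pos.mpr hη
        have := le_max_left η⁻¹ rS
        linarith
      have hmem : (z k)⁻¹ ∈ ball (0 : ℂ) η := by
        rw [mem_ball, dist_zero_right, norm_inv, ← inv_inv η]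
        apply inv_strictAnti₀ (inv_pos.mpr hη)
        exact lt_of_le_of_lt (le_max_left _ _) hk
      refine ⟨(z k)⁻¹, huU ⟨hηu hmem, ?_⟩, ?_⟩
      · simp only [Set.mem_compl_iff, Set.mem_singleton_iff]
        exact inv_ne_zero hzk0
      · show G (z k)⁻¹ = 0
        rw [hGdef]
        simp only [if_neg (inv_ne_zero hzk0), inv_inv]
        exact hzero k
    have hGEq : Set.EqOn G 0 (ball (0 : ℂ) r) :=
      (hGd.analyticOnNhd isOpen_ball).eqOn_zero_of_preconnected_of_frequently_eq_zero
        (convex_ball 0 r).isPreconnected (mem_ball_self hrpos) hGzero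
    have hHfar : ∀ lam : ℂ, rS + 1 < ‖lam‖ → L (cf α β lam) = 0 := by
      intro lam hlam
      have hlam0 : lam ≠ 0 := by
        intro h
        rw [h, norm_zero] at hlam
        linarith
      have hmem : lam⁻¹ ∈ ball (0 : ℂ) r := by
        rw [mem_ball, dist_zero_right, norm_inv, hrdef]
        exact inv_strictAnti₀ (by linarith) hlam
      have h0 := hGEq hmem
      simp only [hGdef, if_neg (inv_ne_zero hlam0), inv_inv, Pi.zero_apply] at h0
      exact h0
    have hlam1U : ((rS + 2 : ℝ) : ℂ) ∈ UU α β := by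
      apply hfar
      rw [Complex.norm_real, Real.norm_eq_abs, abs_of_nonneg (by linarith)]
      linarith
    have hfr : ∃ᶠ w in 𝓝[≠] ((rS + 2 : ℝ) : ℂ), L (cf α β w) = 0 := by
      apply Filter.Eventually.frequently
      apply Filter.Eventually.filter_mono nhdsWithin_le_nhds
      have hmem : {w : ℂ | rS + 1 < ‖w‖} ∈ 𝓝 ((rS + 2 : ℝ) : ℂ) := by
        apply (isOpen_lt continuous_const continuous_norm).mem_nhds
        simp only [Set.mem_setOf_eq, Complex.norm_real, Real.norm_eq_abs]
        rw [abs_of_nonneg (by linarith)]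
        linarith
      filter_upwards [hmem] with w hw using hHfar w hw
    exact hana.eqOn_zero_of_preconnected_of_frequently_eq_zero (isPreconnected_UU α β) hlam1U hfr

end Part2

section Part3
open MeasureTheory Metric Filter Set Topology

lemma nuX_finite (α β : ℝ) (μ : Measure ℝ) [IsFiniteMeasure μ] :
    IsFiniteMeasure (μ.comap (Subtype.val : Set.Icc α β → ℝ)) := by
  constructor
  rw [MeasurableEmbedding.comap_apply (MeasurableEmbedding.subtype_coe measurableSet_Icc)]
  exact (measure_mono (Set.subset_univ _)).trans_lt (measure_lt_top μ _)

lemma integrable_cm {α β : ℝ} (ν : Measure (Set.Icc α β)) [IsFiniteMeasure ν]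
    (f : C(Set.Icc α β, ℂ)) : Integrable f ν :=
  ⟨f.continuous.aestronglyMeasurable,
    HasFiniteIntegral.of_bounded (ae_of_all _ f.norm_coe_le_norm)⟩

/-- The integration functional against (the restriction to the segment of) a finite measure. -/
noncomputable def Lfun (α β : ℝ) (μ : Measure ℝ) [IsFiniteMeasure μ] :
    C(Set.Icc α β, ℂ) →L[ℂ] ℂ :=
  haveI := nuX_finite α β μ
  LinearMap.mkContinuous
    { toFun := fun f => ∫ x, f x ∂(μ.comap (Subtype.val : Set.Icc α β → ℝ))
      map_add' := fun f g => by
        haveI := nuX_finite α β μ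
        simp only [ContinuousMap.add_apply]
        exact integral_add (integrable_cm _ f) (integrable_cm _ g)
      map_smul' := fun c f => by
        simp only [ContinuousMap.smul_apply, smul_eq_mul, RingHom.id_apply]
        exact integral_const_mul c _ }
    ((μ.comap (Subtype.val : Set.Icc α β → ℝ)) Set.univ).toReal
    (fun f => by
      haveI := nuX_finite α β μ
      rw [mul_comm]
      exact norm_integral_le_of_norm_le_const (ae_of_all _ f.norm_coe_le_norm))

lemma Lfun_apply {α β : ℝ} (μ : Measure ℝ) [IsFiniteMeasure μ] (f : C(Set.Icc α β, ℂ)) :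
    Lfun α β μ f = ∫ x, f x ∂(μ.comap (Subtype.val : Set.Icc α β → ℝ)) := rfl

lemma Lfun_norm_le {α β : ℝ} (μ : Measure ℝ) [IsFiniteMeasure μ] :
    ‖Lfun α β μ‖ ≤ (μ Set.univ).toReal := by
  refine (LinearMap.mkContinuous_norm_le _ ENNReal.toReal_nonneg _).trans ?_
  apply ENNReal.toReal_mono (measure_ne_top μ _)
  rw [MeasurableEmbedding.comap_apply (MeasurableEmbedding.subtype_coe measurableSet_Icc)]
  exact measure_mono (Set.subset_univ _)

lemma integral_eq_Lfun {α β : ℝ} (μ : Measure ℝ) [IsFiniteMeasure μ]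
    (hμ : μ (Set.Icc α β)ᶜ = 0) {lam : ℂ} (h : lam ∈ UU α β) :
    ∫ t, 1 / ((t : ℂ) - lam) ∂μ = Lfun α β μ (cf α β lam) := by
  haveI := nuX_finite α β μ
  have h1 : Lfun α β μ (cf α β lam)
      = ∫ x : Set.Icc α β, (((x : ℝ) : ℂ) - lam)⁻¹
          ∂(μ.comap (Subtype.val : Set.Icc α β → ℝ)) := by
    rw [Lfun_apply]
    exact integral_congr_ae (ae_of_all _ fun x => cf_apply h x)
  rw [h1, integral_subtype_comap measurableSet_Icc (fun t : ℝ => ((t : ℂ) - lam)⁻¹)]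
  have h2 : μ.restrict (Set.Icc α β) = μ := by
    apply Measure.restrict_eq_self_of_ae_mem
    rw [MeasureTheory.ae_iff]
    have : {x : ℝ | ¬x ∈ Set.Icc α β} = (Set.Icc α β)ᶜ := rfl
    rw [this]
    exact hμ
  rw [h2]
  simp only [one_div]

end Part3


end StmtAux19

open MeasureTheory

/-- Markov-type convergence theorem for multipoint Padé approximants: if the
Markov functions `R_n` of uniformly bounded measures supported in `[α, β]`
interpolate the Markov function `φ` at the points `z_0, …, z_n` (pairwise
distinct, with imaginary parts bounded below by `δ > 0`), then `R_n → φ`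
locally uniformly in `ℂ ∖ [α, β]`. -/
theorem stmt19 (α β : ℝ) (hαβ : α ≤ β) (σ : Measure ℝ) [IsFiniteMeasure σ]
    (hsupp : σ (Set.Icc α β)ᶜ = 0) (hpos : 0 < σ Set.univ)
    (δ : ℝ) (hδ : 0 < δ) (z : ℕ → ℂ) (hzinj : Function.Injective z)
    (hz : ∀ k, δ < (z k).im)
    (σn : ℕ → Measure ℝ) (hfin : ∀ n, IsFiniteMeasure (σn n))
    (hsuppn : ∀ n, σn n (Set.Icc α β)ᶜ = 0)
    (C : ℝ) (hC : ∀ n, (σn n Set.univ).toReal ≤ C)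
    (hinterp : ∀ n k, k ≤ n →
      (∫ t, 1 / ((t : ℂ) - z k) ∂(σn n)) = ∫ t, 1 / ((t : ℂ) - z k) ∂σ) :
    ∀ K : Set ℂ, IsCompact K → K ⊆ ((fun x : ℝ => (x : ℂ)) '' Set.Icc α β)ᶜ →
      TendstoUniformlyOn (fun n lam => ∫ t, 1 / ((t : ℂ) - lam) ∂(σn n))
        (fun lam => ∫ t, 1 / ((t : ℂ) - lam) ∂σ) Filter.atTop K := by
  intro K hK hKU
  rcases Set.eq_empty_or_nonempty K with rfl | ⟨κ0, hκ0⟩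
  · exact tendstoUniformlyOn_empty
  have hKU' : K ⊆ UU α β := hKU
  set Fn : ℕ → ℂ → ℂ := fun n lam => ∫ t, 1 / ((t : ℂ) - lam) ∂(σn n) with hFndef
  set φf : ℂ → ℂ := fun lam => ∫ t, 1 / ((t : ℂ) - lam) ∂σ with hφdef
  set E := C(Set.Icc α β, ℂ) with hEdef
  let Λn : ℕ → (E →L[ℂ] ℂ) := fun n => @Lfun α β (σn n) (hfin n)
  let Λs : E →L[ℂ] ℂ := Lfun α β σ
  set C' : ℝ := max C 0 with hC'def
  have hC'0 : (0 : ℝ) ≤ C' := le_max_right C 0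
  have hΛn_norm : ∀ n, ‖Λn n‖ ≤ C' := fun n =>
    (@Lfun_norm_le α β (σn n) (hfin n)).trans ((hC n).trans (le_max_left _ _))
  have hzU : ∀ k, z k ∈ UU α β := fun k => mem_UU_of_im_pos (hδ.trans (hz k))
  have htrans_n : ∀ n, ∀ lam ∈ UU α β, Fn n lam = Λn n (cf α β lam) := fun n lam hlam => by
    haveI := hfin n
    exact integral_eq_Lfun (σn n) (hsuppn n) hlam
  have htrans_σ : ∀ lam ∈ UU α β, φf lam = Λs (cf α β lam) := fun lam hlam =>
    integral_eq_Lfun σ hsupp hlam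
  by_contra hcon
  rw [Metric.tendstoUniformlyOn_iff] at hcon
  push_neg at hcon
  obtain ⟨ε, hε, hfreq⟩ := hcon
  set bad : Set ℕ := {n | ∃ x, x ∈ K ∧ ε ≤ dist (φf x) (Fn n x)} with hbaddef
  have hlne : (Filter.atTop ⊓ Filter.principal bad).NeBot :=
    Filter.frequently_iff_neBot.mp hfreq
  set l := Filter.atTop ⊓ Filter.principal bad with hldef
  have hsel : ∀ n : ℕ, ∃ x : ℂ, x ∈ K ∧ (n ∈ bad → ε ≤ dist (φf x) (Fn n x)) := by
    intro n
    by_cases hbn : n ∈ bad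
    · obtain ⟨y, hyK, hy⟩ := hbn
      exact ⟨y, hyK, fun _ => hy⟩
    · exact ⟨κ0, hκ0, fun h => absurd h hbn⟩
  choose xs hxsK hxs using hsel
  set B : Set (WeakDual ℂ E) := ⇑WeakDual.toStrongDual ⁻¹' Metric.closedBall 0 C' with hBdef
  have hBcomp : IsCompact B := WeakDual.isCompact_closedBall (𝕜 := ℂ) 0 C'
  set Ψ : ℕ → ℂ × WeakDual ℂ E :=
    fun n => (xs n, StrongDual.toWeakDual (Λn n)) with hΨdef
  have hΨmem : ∀ n, Ψ n ∈ K ×ˢ B := fun n => ⟨hxsK n, by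
    simp only [hBdef, Set.mem_preimage, Metric.mem_closedBall, dist_zero_right]
    exact (dist_zero_right (Λn n : StrongDual ℂ E)).trans_le (hΛn_norm n)⟩
  have hmap_le : Filter.map Ψ l ≤ Filter.principal (K ×ˢ B) :=
    Filter.le_principal_iff.mpr (Filter.mem_map.mpr (Filter.Eventually.of_forall hΨmem))
  obtain ⟨⟨lam0, Λ0⟩, hpmem, hpcl⟩ := (hK.prod hBcomp).exists_clusterPt hmap_le
  have hlamK : lam0 ∈ K := hpmem.1
  have hlamU : lam0 ∈ UU α β := hKU' hlamK
  have hfreq' : ∀ s : Set (ℂ × WeakDual ℂ E), IsOpen s → (lam0, Λ0) ∈ s →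
      ∃ᶠ n in l, Ψ n ∈ s := by
    intro s hs hmem
    exact Filter.frequently_map.mp (Filter.frequently_iff.mpr
      (fun {V} hV => (clusterPt_iff_nonempty.mp hpcl (hs.mem_nhds hmem) hV).imp fun x hx => ⟨hx.2, hx.1⟩))
  have hlatTop : l ≤ Filter.atTop := inf_le_left
  -- interpolation values pass to the cluster point
  have hΛ0 : ∀ k, Λ0 (cf α β (z k)) = Λs (cf α β (z k)) := by
    intro k
    by_contra hne
    have hθ : 0 < dist (Λ0 (cf α β (z k))) (Λs (cf α β (z k))) := dist_pos.mpr hne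
    set θ := dist (Λ0 (cf α β (z k))) (Λs (cf α β (z k))) with hθdef
    have hopen : IsOpen {q : ℂ × WeakDual ℂ E |
        dist (q.2 (cf α β (z k))) (Λ0 (cf α β (z k))) < θ / 2} :=
      isOpen_lt (((WeakDual.eval_continuous (cf α β (z k))).comp continuous_snd).dist
        continuous_const) continuous_const
    have hfr := hfreq' _ hopen (by
      simp only [Set.mem_setOf_eq, dist_self]
      positivity)
    have hev : ∀ᶠ n in l, Λn n (cf α β (z k)) = Λs (cf α β (z k)) := by
      filter_upwards [hlatTop (Filter.eventually_ge_atTop k)] with n hn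
      calc Λn n (cf α β (z k)) = Fn n (z k) := (htrans_n n (z k) (hzU k)).symm
        _ = φf (z k) := hinterp n k hn
        _ = Λs (cf α β (z k)) := htrans_σ (z k) (hzU k)
    obtain ⟨n, hn1, hn2⟩ := (hfr.and_eventually hev).exists
    simp only [Set.mem_setOf_eq, hΨdef] at hn1
    rw [show (StrongDual.toWeakDual (Λn n)) (cf α β (z k)) = Λn n (cf α β (z k))
      from rfl, hn2, dist_comm] at hn1
    rw [hθdef] at hn1
    linarith
  -- identity theorem
  set L0 : E →L[ℂ] ℂ := WeakDual.toStrongDual Λ0 - Λs with hL0def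
  have hzero : ∀ k, L0 (cf α β (z k)) = 0 := fun k => by
    simp only [hL0def, ContinuousLinearMap.sub_apply]
    rw [show (WeakDual.toStrongDual Λ0) (cf α β (z k)) = Λ0 (cf α β (z k)) from rfl,
      hΛ0 k, sub_self]
  have hkey : ∀ lam ∈ UU α β, Λ0 (cf α β lam) = Λs (cf α β lam) := by
    intro lam hlam
    have h0 := H_eqOn_zero hαβ hδ hzinj hz L0 hzero hlam
    simp only [hL0def, ContinuousLinearMap.sub_apply, Pi.zero_apply] at h0
    have h0' : Λ0 (cf α β lam) - Λs (cf α β lam) = 0 := h0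
    exact sub_eq_zero.mp h0'
  -- continuity data at lam0
  have hφcont : ContinuousAt (fun lam => Λs (cf α β lam)) lam0 :=
    (H_diffOn hαβ Λs).continuousOn.continuousAt ((isOpen_UU α β).mem_nhds hlamU)
  have hcfcont : ContinuousAt (cf α β) lam0 := cf_continuousAt hαβ hlamU
  obtain ⟨η1, hη1, hφη⟩ := Metric.continuousAt_iff.mp hφcont (ε / 4) (by positivity)
  obtain ⟨η2, hη2, hcfη⟩ := Metric.continuousAt_iff.mp hcfcont (ε / (4 * (C' + 1)))
    (by positivity)
  set η := min η1 η2 with hηdef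
  have hηpos : 0 < η := lt_min hη1 hη2
  have hopen2 : IsOpen {q : ℂ × WeakDual ℂ E |
      q.1 ∈ Metric.ball lam0 η ∧ dist (q.2 (cf α β lam0)) (Λ0 (cf α β lam0)) < ε / 4} :=
    IsOpen.inter (Metric.isOpen_ball.preimage continuous_fst)
      (isOpen_lt (((WeakDual.eval_continuous (cf α β lam0)).comp continuous_snd).dist
        continuous_const) continuous_const)
  have hfr2 := hfreq' _ hopen2 (by
    refine ⟨Metric.mem_ball_self hηpos, ?_⟩
    simp only [dist_self]
    positivity)
  have hev2 : ∀ᶠ n in l, n ∈ bad :=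
    (Filter.eventually_principal.mpr (fun n hn => hn)).filter_mono inf_le_right
  obtain ⟨n, hn1, hbadn⟩ := (hfr2.and_eventually hev2).exists
  simp only [Set.mem_setOf_eq, hΨdef] at hn1
  obtain ⟨hball, hdist⟩ := hn1
  have hx := hxs n hbadn
  have hxK : xs n ∈ K := hxsK n
  have hxU : xs n ∈ UU α β := hKU' hxK
  have hdx : dist (xs n) lam0 < η := Metric.mem_ball.mp hball
  -- four-term estimate
  have e1 : dist (φf (xs n)) (Λs (cf α β lam0)) < ε / 4 := by
    rw [htrans_σ (xs n) hxU]
    exact hφη (lt_of_lt_of_le hdx (min_le_left _ _))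
  have e2 : dist (Λs (cf α β lam0)) (Λn n (cf α β lam0)) < ε / 4 := by
    rw [← hkey lam0 hlamU, dist_comm]
    exact hdist
  have e3 : dist (Λn n (cf α β lam0)) (Fn n (xs n)) < ε / 4 := by
    rw [htrans_n n (xs n) hxU]
    have hcd : dist (cf α β (xs n)) (cf α β lam0) < ε / (4 * (C' + 1)) :=
      hcfη (lt_of_lt_of_le hdx (min_le_right _ _))
    have hle : dist (Λn n (cf α β lam0)) (Λn n (cf α β (xs n)))
        ≤ C' * dist (cf α β lam0) (cf α β (xs n)) := by
      rw [dist_eq_norm, dist_eq_norm, ← map_sub]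
      exact ((Λn n).le_opNorm _).trans
        (mul_le_mul_of_nonneg_right (hΛn_norm n) (norm_nonneg _))
    rw [dist_comm (cf α β (xs n)) (cf α β lam0)] at hcd
    have : C' * dist (cf α β lam0) (cf α β (xs n)) < ε / 4 := by
      calc C' * dist (cf α β lam0) (cf α β (xs n)) ≤ C' * (ε / (4 * (C' + 1))) := by
            exact mul_le_mul_of_nonneg_left hcd.le hC'0
        _ < ε / 4 := by
            have hC1 : (0:ℝ) < C' + 1 := by linarith
            have heq : C' * (ε / (4 * (C' + 1))) = (C' / (C' + 1)) * (ε / 4) := by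
              field_simp
            rw [heq]
            have hlt1 : C' / (C' + 1) < 1 := (div_lt_one hC1).mpr (by linarith)
            have hε4 : (0:ℝ) < ε / 4 := by positivity
            calc (C' / (C' + 1)) * (ε / 4) < 1 * (ε / 4) :=
                  mul_lt_mul_of_pos_right hlt1 hε4
              _ = ε / 4 := one_mul _
    exact lt_of_le_of_lt hle this
  have htot : dist (φf (xs n)) (Fn n (xs n)) < ε := by
    calc dist (φf (xs n)) (Fn n (xs n))
        ≤ dist (φf (xs n)) (Λs (cf α β lam0)) + dist (Λs (cf α β lam0)) (Λn n (cf α β lam0))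
          + dist (Λn n (cf α β lam0)) (Fn n (xs n)) := dist_triangle4 _ _ _ _
      _ < ε / 4 + ε / 4 + ε / 4 := by exact add_lt_add (add_lt_add e1 e2) e3
      _ < ε := by linarith
  exact absurd hx (not_le.mpr htot)
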